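/- Let F be a field of characteristic 0 or coprime to n, and let Φ_n(X) = f_1(X) ⋯ f_k(X) be the factorization of the n-th cyclotomic polynomial into irreducible factors over F, each of degree s. Then there exist natural numbers r_1 = 1, r_2, …, r_s such that for every index i and every root ζ of f_i(X) (in a splitting field), the set of roots of f_i(X) is exactly {ζ^{r_1}, ζ^{r_2}, …, ζ^{r_s}}; in particular the exponent set {r_1, …, r_s} is independent of the choice of the irreducible factor f_i and of the choice of root ζ of f_i. -/

import Mathlib

open scoped TensorProduct

section Defs

variable {k : Type*} [Field k] {M : Type*} [Monoid M]

/-- Equivalence (isomorphism) of representations of a monoid over a field. -/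
def RepIso {V W : Type*} [AddCommGroup V] [Module k V] [AddCommGroup W] [Module k W]
    (ρ : Representation k M V) (ρ' : Representation k M W) : Prop :=
  ∃ e : V ≃ₗ[k] W, ∀ (g : M) (v : V), e (ρ g v) = ρ' g (e v)

/-- Irreducibility of a representation: the space is nonzero and has no proper nonzero
invariant subspace. -/
def RepIrred {V : Type*} [AddCommGroup V] [Module k V] (ρ : Representation k M V) : Prop :=
  Nontrivial V ∧ ∀ U : Submodule k V, (∀ g : M, ∀ v ∈ U, ρ g v ∈ U) → U = ⊥ ∨ U = ⊤

variable {G : Type*} [Group G]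

/-- Conjugation by `x` as a monoid homomorphism of a normal subgroup. -/
def conjHom {H : Subgroup G} (hH : H.Normal) (x : G) : H →* H :=
  MonoidHom.mk' (fun h => ⟨x * (h : G) * x⁻¹, hH.conj_mem (h : G) h.2 x⟩)
    (by intro a b; ext; push_cast; group)

/-- The conjugate representation `η^x`, `η^x(h) = η (x h x⁻¹)`. -/
def ConjRep {H : Subgroup G} (hH : H.Normal) (x : G) {V : Type*} [AddCommGroup V] [Module k V]
    (η : Representation k H V) : Representation k H V :=
  η.comp (conjHom hH x)

/-- `ρ` is (a model of) the representation of `G` induced from the representation `η` of the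
subgroup `H`: there is an `H`-equivariant embedding `ι : V → W` and `W` is the internal direct
sum, over the cosets `gH`, of the translates `ρ(g)(ι V)`. -/
def IsInducedFrom (H : Subgroup G) {V W : Type*} [AddCommGroup V] [Module k V]
    [AddCommGroup W] [Module k W]
    (η : Representation k H V) (ρ : Representation k G W) : Prop :=
  ∃ ι : V →ₗ[k] W, Function.Injective ι ∧
    (∀ (h : H) (v : V), ι (η h v) = ρ (h : G) (ι v)) ∧
    ∃ S : G ⧸ H → Submodule k W,
      (∀ g : G, S (g : G ⧸ H) = (LinearMap.range ι).map (ρ g)) ∧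
      iSupIndep S ∧ iSup S = ⊤

/-- The subrepresentation on an invariant subspace. -/
def SubRep {V : Type*} [AddCommGroup V] [Module k V] (ρ : Representation k M V)
    (U : Submodule k V) (hU : ∀ g : M, ∀ v ∈ U, ρ g v ∈ U) : Representation k M U where
  toFun g := LinearMap.restrict (ρ g) (hU g)
  map_one' := by ext v; simp [LinearMap.restrict_apply]
  map_mul' g g' := by ext v; simp [LinearMap.restrict_apply]

/-- The direct sum of a family of representations (realized on the product space). -/
def PiRep {ι : Type*} {W : ι → Type*} [∀ i, AddCommGroup (W i)] [∀ i, Module k (W i)]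
    (ρ : ∀ i, Representation k M (W i)) : Representation k M (∀ i, W i) where
  toFun g := LinearMap.pi fun i => (ρ i g).comp (LinearMap.proj i)
  map_one' := by ext v; simp
  map_mul' g g' := by ext v; simp

/-- Extension of scalars of a representation along a field extension `F ⊆ E`. -/
noncomputable def BaseChangeRep {F : Type*} [Field F] (E : Type*) [Field E] [Algebra F E]
    {V : Type*} [AddCommGroup V] [Module F V] (ρ : Representation F M V) :
    Representation E M (E ⊗[F] V) where
  toFun g := LinearMap.baseChange E (ρ g)
  map_one' := by ext v; simp
  map_mul' g g' := by ext v; simp [map_mul]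

open scoped Classical in
/-- The conjugacy class sum of `x` in the group algebra. -/
noncomputable def classSum (k : Type*) [Field k] {G : Type*} [Group G] [Fintype G] (x : G) :
    MonoidAlgebra k G :=
  ∑ g : G, if IsConj x g then MonoidAlgebra.single g (1 : k) else 0

/-- A primitive central idempotent of a ring. -/
def IsPrimCentralIdem {R : Type*} [Ring R] (e : R) : Prop :=
  e ≠ 0 ∧ IsIdempotentElem e ∧ e ∈ Set.center R ∧
    ∀ f : R, f ∈ Set.center R → IsIdempotentElem f → f * e = f → f = 0 ∨ f = e

/-- `e` is the primitive central idempotent of the group algebra attached to the irreducible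
representation `ρ`: it is a primitive central idempotent acting as the identity on `ρ`. -/
noncomputable def IsIdemFor {V : Type*} [AddCommGroup V] [Module k V]
    (ρ : Representation k M V) (e : MonoidAlgebra k M) : Prop :=
  IsPrimCentralIdem e ∧ ρ.asAlgebraHom e = 1

/-- `ρ'` is the twist of the `E`-representation `ρ` by the automorphism `γ` of `E` over `F`. -/
def IsTwist {F E : Type*} [Field F] [Field E] [Algebra F E]
    {V W : Type*} [AddCommGroup V] [Module E V] [AddCommGroup W] [Module E W]
    (γ : E ≃ₐ[F] E) (ρ : Representation E M V) (ρ' : Representation E M W) : Prop :=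
  ∃ e : V ≃+ W, (∀ (c : E) (v : V), e (c • v) = γ c • e v) ∧
    ∀ (g : M) (v : V), e (ρ g v) = ρ' g (e v)

/-- Two `E`-representations are Galois conjugate over `F`. -/
def IsGaloisConj (F : Type*) {E : Type*} [Field F] [Field E] [Algebra F E]
    {V W : Type*} [AddCommGroup V] [Module E V] [AddCommGroup W] [Module E W]
    (ρ : Representation E M V) (ρ' : Representation E M W) : Prop :=
  ∃ γ : E ≃ₐ[F] E, IsTwist γ ρ ρ'

/-- The canonical embedding of the group algebra of a subgroup into the group algebra
of the ambient group. -/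
noncomputable def algEmb (k : Type*) [Field k] {G : Type*} [Group G] (H : Subgroup G) :
    MonoidAlgebra k H →ₐ[k] MonoidAlgebra k G :=
  MonoidAlgebra.mapDomainAlgHom k k H.subtype

end Defs


lemma aux_root_iff {F K : Type*} [Field F] [Field K] [Algebra F K]
    {p : Polynomial F} (hp : Irreducible p) (hm : p.Monic) {ζ : K}
    (hζ : Polynomial.aeval ζ p = 0) (t : ℕ) :
    Polynomial.aeval (ζ ^ t) p = 0 ↔ p ∣ p.comp (Polynomial.X ^ t) := by
  have hmin : minpoly F ζ = p := (minpoly.eq_of_irreducible_of_monic hp hζ hm).symm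
  have key : Polynomial.aeval ζ (p.comp (Polynomial.X ^ t)) = Polynomial.aeval (ζ ^ t) p := by
    rw [Polynomial.aeval_comp]; simp
  constructor
  · intro h
    have hd := minpoly.dvd F ζ (p := p.comp (Polynomial.X ^ t)) (by rw [key, h])
    rwa [hmin] at hd
  · rintro ⟨q, hq⟩
    rw [← key, hq, map_mul, hζ, zero_mul]

lemma aux_neZero {F : Type*} [Field F] {n : ℕ} (hFn : (n : F) ≠ 0)
    (K : Type*) [Field K] [Algebra F K] : (n : K) ≠ 0 := by
  intro h0
  apply hFn
  apply (algebraMap F K).injective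
  rw [map_natCast, map_zero, h0]

lemma aux_prim {F : Type*} [Field F] {n : ℕ} (hFn : (n : F) ≠ 0)
    {p : Polynomial F} (hp : p ∣ Polynomial.cyclotomic n F)
    {K : Type*} [Field K] [Algebra F K] {ζ : K} (hζ : Polynomial.aeval ζ p = 0) :
    IsPrimitiveRoot ζ n := by
  haveI : NeZero (n : K) := ⟨aux_neZero hFn K⟩
  have hroot : Polynomial.IsRoot (Polynomial.cyclotomic n K) ζ := by
    have hmap : Polynomial.cyclotomic n K =
        Polynomial.map (algebraMap F K) (Polynomial.cyclotomic n F) :=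
      (Polynomial.map_cyclotomic n (algebraMap F K)).symm
    rw [Polynomial.IsRoot, hmap]
    obtain ⟨q, hq⟩ := Polynomial.map_dvd (algebraMap F K) hp
    rw [hq, Polynomial.eval_mul]
    have h0 : Polynomial.eval ζ (Polynomial.map (algebraMap F K) p) = 0 := by
      rwa [Polynomial.eval_map, ← Polynomial.aeval_def]
    rw [h0, zero_mul]
  exact Polynomial.isRoot_cyclotomic_iff.mp hroot

lemma aux_main {F : Type*} [Field F] {n : ℕ} (hn : 0 < n) (hFn : (n : F) ≠ 0)
    {k : ℕ} (f : Fin k → Polynomial F) (hirr : ∀ i, Irreducible (f i))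
    (hmonic : ∀ i, (f i).Monic) (hdvd : ∀ i, f i ∣ Polynomial.cyclotomic n F)
    (i₀ : Fin k)
    (hindep : ∀ (i j : Fin k) (t : ℕ),
      f i ∣ (f i).comp (Polynomial.X ^ t) → f j ∣ (f j).comp (Polynomial.X ^ t))
    (R : Finset ℕ)
    (hRmem : ∀ t : ℕ, t ∈ R ↔
      (1 ≤ t ∧ t < n + 1) ∧ t.Coprime n ∧ f i₀ ∣ (f i₀).comp (Polynomial.X ^ t))
    (i : Fin k) (K : Type*) [Field K] [Algebra F K]
    (ζ : K) (hζ : Polynomial.aeval ζ (f i) = 0) :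
    {z : K | Polynomial.aeval z (f i) = 0} = (fun t : ℕ => ζ ^ t) '' ↑R := by
  haveI : NeZero (n : K) := ⟨aux_neZero hFn K⟩
  haveI : NeZero n := ⟨hn.ne'⟩
  have hp : IsPrimitiveRoot ζ n := aux_prim hFn (hdvd i) hζ
  have hD1 : f i₀ ∣ (f i₀).comp (Polynomial.X ^ 1) := by
    rw [pow_one, Polynomial.comp_X]
  ext z
  simp only [Set.mem_setOf_eq, Set.mem_image, Finset.mem_coe, hRmem]
  constructor
  · intro hz
    have hpz : IsPrimitiveRoot z n := aux_prim hFn (hdvd i) hz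
    obtain ⟨t, htn, ht⟩ := hp.eq_pow_of_pow_eq_one hpz.pow_eq_one
    have hcop : t.Coprime n := (hp.pow_iff_coprime hn t).mp (ht ▸ hpz)
    by_cases h0 : t = 0
    · subst h0
      have hn1 : n = 1 := by simpa [Nat.coprime_zero_left] using hcop
      refine ⟨1, ⟨⟨le_refl 1, by omega⟩, Nat.coprime_one_left n, hD1⟩, ?_⟩
      have hζ1 : ζ = 1 := by
        have h := hp.pow_eq_one
        rwa [hn1, pow_one] at h
      rw [← ht, pow_zero, hζ1, one_pow]
    · have hDit : f i ∣ (f i).comp (Polynomial.X ^ t) :=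
        (aux_root_iff (hirr i) (hmonic i) hζ t).mp (by rw [ht]; exact hz)
      exact ⟨t, ⟨⟨Nat.one_le_iff_ne_zero.mpr h0, by omega⟩, hcop, hindep i i₀ t hDit⟩, ht⟩
  · rintro ⟨t, ⟨-, -, hD⟩, rfl⟩
    exact (aux_root_iff (hirr i) (hmonic i) hζ t).mpr (hindep i₀ i t hD)


/-- There is a single exponent set `{r_1 = 1, r_2, …, r_s}` of natural numbers
such that, for every irreducible factor `f_i` of `Φ_n` over `F` and every root `ζ` of `f_i` in
a splitting field, the set of roots of `f_i` is exactly `{ζ^{r_1}, …, ζ^{r_s}}`. -/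
theorem stmt_13 {F : Type*} [Field F] (n : ℕ) (hn : 0 < n)
    (hchar : CharZero F ∨ Nat.Coprime (ringChar F) n)
    (k s : ℕ) (f : Fin k → Polynomial F) (hirr : ∀ i, Irreducible (f i))
    (hmonic : ∀ i, (f i).Monic)
    (hfac : Polynomial.cyclotomic n F = ∏ i, f i)
    (hdeg : ∀ i, (f i).natDegree = s) :
    ∃ R : Finset ℕ, 1 ∈ R ∧ R.card = s ∧
      ∀ (i : Fin k) (K : Type*) [Field K] [Algebra F K],
        Polynomial.Splits ((f i).map (algebraMap F K)) →
        ∀ ζ : K, Polynomial.aeval ζ (f i) = 0 →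
          {z : K | Polynomial.aeval z (f i) = 0} = (fun t : ℕ => ζ ^ t) '' ↑R := by
  classical
  haveI : NeZero n := ⟨hn.ne'⟩
  have hk : 0 < k := by
    by_contra h
    push_neg at h
    interval_cases k
    have h1 : (Polynomial.cyclotomic n F).natDegree = n.totient :=
      Polynomial.natDegree_cyclotomic n F
    rw [hfac] at h1
    simp only [Finset.univ_eq_empty, Finset.prod_empty, Polynomial.natDegree_one] at h1
    exact (Nat.totient_pos.mpr hn).ne h1
  set i₀ : Fin k := ⟨0, hk⟩ with hi₀
  have hFn : (n : F) ≠ 0 := by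
    rcases hchar with h | h
    · exact Nat.cast_ne_zero.mpr hn.ne'
    · intro h0
      have hdvd : ringChar F ∣ n := (CharP.cast_eq_zero_iff F (ringChar F) n).mp h0
      have h1 : ringChar F = 1 := Nat.Coprime.eq_one_of_dvd h hdvd
      exact CharP.char_ne_one F (ringChar F) h1
  have hdvd : ∀ i, f i ∣ Polynomial.cyclotomic n F := fun i => by
    rw [hfac]; exact Finset.dvd_prod_of_mem f (Finset.mem_univ i)
  have hXn : (Polynomial.X ^ n - 1 : Polynomial F).Separable :=
    Polynomial.X_pow_sub_one_separable_iff.mpr hFn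
  have hsep : ∀ i, (f i).Separable := fun i =>
    hXn.of_dvd ((hdvd i).trans (Polynomial.cyclotomic.dvd_X_pow_sub_one n F))
  have hs : 0 < s := by rw [← hdeg i₀]; exact (hirr i₀).natDegree_pos
  -- splitting field setup
  set K₀ := (Polynomial.cyclotomic n F).SplittingField with hK₀
  haveI : NeZero (n : K₀) := ⟨aux_neZero hFn K₀⟩
  have hKsplit : ∀ i, Polynomial.Splits ((f i).map (algebraMap F K₀)) := fun i =>
    (Polynomial.SplittingField.splits _).of_dvd
      (Polynomial.map_ne_zero (Polynomial.cyclotomic_ne_zero n F))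
      (Polynomial.map_dvd _ (hdvd i))
  have hroot : ∀ i, ∃ ζ : K₀, Polynomial.aeval ζ (f i) = 0 := by
    intro i
    have hdeg0 : (f i).degree ≠ 0 := by
      rw [Polynomial.degree_eq_natDegree (hirr i).ne_zero, hdeg i]
      exact_mod_cast hs.ne'
    obtain ⟨ζ, hζ⟩ := (hKsplit i).exists_eval_eq_zero (by rw [Polynomial.degree_map]; exact hdeg0)
    exact ⟨ζ, by rwa [Polynomial.eval_map, ← Polynomial.aeval_def] at hζ⟩
  -- independence of the exponent condition from the factor
  have hindep : ∀ (i j : Fin k) (t : ℕ),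
      f i ∣ (f i).comp (Polynomial.X ^ t) → f j ∣ (f j).comp (Polynomial.X ^ t) := by
    intro i j t hit
    obtain ⟨ζi, hζi⟩ := hroot i
    obtain ⟨ζj, hζj⟩ := hroot j
    have hpi : IsPrimitiveRoot ζi n := aux_prim hFn (hdvd i) hζi
    have hpj : IsPrimitiveRoot ζj n := aux_prim hFn (hdvd j) hζj
    have hrt : Polynomial.aeval (ζi ^ t) (f i) = 0 :=
      (aux_root_iff (hirr i) (hmonic i) hζi t).mpr hit
    have hmin : minpoly F ζi = f i :=
      (minpoly.eq_of_irreducible_of_monic (hirr i) hζi (hmonic i)).symm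
    have halg : IsAlgebraic F ζi := ⟨f i, (hirr i).ne_zero, hζi⟩
    obtain ⟨σ, hσ⟩ := minpoly.exists_algEquiv_of_root' halg (by rw [hmin]; exact hrt)
    obtain ⟨a, -, ha⟩ := hpi.eq_pow_of_pow_eq_one hpj.pow_eq_one
    have hσj : σ ζj = ζj ^ t := by
      rw [← ha, map_pow, hσ, ← pow_mul, mul_comm, pow_mul]
    have hrtj : Polynomial.aeval (ζj ^ t) (f j) = 0 := by
      have h : Polynomial.aeval (σ ζj) (f j) = σ (Polynomial.aeval ζj (f j)) :=
        Polynomial.aeval_algHom_apply (σ : K₀ →ₐ[F] K₀) ζj (f j)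
      rw [← hσj, h, hζj, map_zero]
    exact (aux_root_iff (hirr j) (hmonic j) hζj t).mp hrtj
  -- the exponent set
  set R : Finset ℕ := (Finset.Ico 1 (n+1)).filter
    (fun t => t.Coprime n ∧ f i₀ ∣ (f i₀).comp (Polynomial.X ^ t)) with hR
  have hRmem : ∀ t : ℕ, t ∈ R ↔
      (1 ≤ t ∧ t < n + 1) ∧ t.Coprime n ∧ f i₀ ∣ (f i₀).comp (Polynomial.X ^ t) := by
    intro t
    rw [hR, Finset.mem_filter, Finset.mem_Ico]
  have h1R : 1 ∈ R := by
    rw [hRmem]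
    exact ⟨⟨le_refl 1, by omega⟩, Nat.coprime_one_left n,
      by rw [pow_one, Polynomial.comp_X]⟩
  -- cardinality
  obtain ⟨ζ₀, hζ₀⟩ := hroot i₀
  have hp0 : IsPrimitiveRoot ζ₀ n := aux_prim hFn (hdvd i₀) hζ₀
  have hset := aux_main hn hFn f hirr hmonic hdvd i₀ hindep R hRmem i₀ K₀ ζ₀ hζ₀
  have hpowmod : ∀ m : ℕ, ζ₀ ^ (m % n) = ζ₀ ^ m := by
    intro m
    conv_rhs => rw [← Nat.div_add_mod m n]
    rw [pow_add, pow_mul, hp0.pow_eq_one, one_pow, one_mul]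
  have hinj : Set.InjOn (fun t : ℕ => ζ₀ ^ t) ↑R := by
    intro a ha b hb hab
    rw [Finset.mem_coe, hRmem] at ha hb
    have hmod : a % n = b % n := by
      refine hp0.pow_inj (Nat.mod_lt _ hn) (Nat.mod_lt _ hn) ?_
      rw [hpowmod, hpowmod]; exact hab
    rcases eq_or_lt_of_le (Nat.lt_succ_iff.mp ha.1.2) with hA | hA <;>
      rcases eq_or_lt_of_le (Nat.lt_succ_iff.mp hb.1.2) with hB | hB
    · omega
    · rw [hA, Nat.mod_self, Nat.mod_eq_of_lt hB] at hmod; omega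
    · rw [hB, Nat.mod_self, Nat.mod_eq_of_lt hA] at hmod; omega
    · rwa [Nat.mod_eq_of_lt hA, Nat.mod_eq_of_lt hB] at hmod
  have h2 : (f i₀).rootSet K₀ = (fun t : ℕ => ζ₀ ^ t) '' ↑R := by
    rw [← hset]
    ext z
    simp [Polynomial.mem_rootSet, (hirr i₀).ne_zero]
  have hcard : R.card = s := by
    calc R.card = (↑R : Set ℕ).ncard := (Set.ncard_coe_finset R).symm
      _ = ((fun t : ℕ => ζ₀ ^ t) '' ↑R).ncard := (Set.ncard_image_of_injOn hinj).symm
      _ = ((f i₀).rootSet K₀).ncard := by rw [h2]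
      _ = Nat.card ((f i₀).rootSet K₀) := (Nat.card_coe_set_eq _).symm
      _ = Fintype.card ((f i₀).rootSet K₀) := Nat.card_eq_fintype_card
      _ = (f i₀).natDegree := Polynomial.card_rootSet_eq_natDegree (hsep i₀) (hKsplit i₀)
      _ = s := hdeg i₀
  exact ⟨R, h1R, hcard, fun i K _ _ _ ζ hζ =>
    aux_main hn hFn f hirr hmonic hdvd i₀ hindep R hRmem i K ζ hζ⟩
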